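/- Let T_t(X) = G₁(t)* X G₁(t) + X G₀(t) + G₀(t)* X and Q_t(X) = X G₁(t) + G₁(t)* X, with G₀(t) = −I⊗(½L*L + iH) − σ₊⊗(L + L*S)·νξ(t) and G₁(t) = I⊗L + σ₊⊗(S−I)·νξ(t). Then for every bounded X on the system Hilbert space and every 2×2 matrix A: T_t(A⊗X) + νξ(t)·Q_t(A⊗X)(σ₊⊗I) + ν*ξ(t)*·(σ₋⊗I)Q_t(A⊗X) = 𝓖_t(A⊗X), where 𝓖_t is the extended single-photon generator. -/

import Mathlib

open ContinuousLinearMap ComplexConjugate Matrix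
open scoped TensorProduct

set_option maxHeartbeats 1600000 in
theorem stmt17 {E : Type*} [NormedAddCommGroup E] [InnerProductSpace ℂ E] [CompleteSpace E]
    (L S H : E →L[ℂ] E)
    (hS : adjoint S * S = 1 ∧ S * adjoint S = 1) (hH : IsSelfAdjoint H)
    (ν : ℂ) (ξ : ℝ → ℂ) (hξ : Continuous ξ)
    (σp σm : Matrix (Fin 2) (Fin 2) ℂ)
    (hp : σp = Matrix.single 1 0 1) (hm : σm = Matrix.single 0 1 1)
    (𝓛 : (E →L[ℂ] E) → (E →L[ℂ] E))
    (h𝓛 : ∀ X, 𝓛 X = (1/2 : ℂ) • (adjoint L * (X * L - L * X))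
        + (1/2 : ℂ) • ((adjoint L * X - X * adjoint L) * L)
        - Complex.I • (X * H - H * X))
    (G : ℝ → Matrix (Fin 2) (Fin 2) ℂ → (E →L[ℂ] E) →
      (Matrix (Fin 2) (Fin 2) ℂ ⊗[ℂ] (E →L[ℂ] E)))
    (hG : ∀ t A X, G t A X = A ⊗ₜ[ℂ] 𝓛 X
        + (ν * ξ t) • ((A * σp) ⊗ₜ[ℂ] ((adjoint L * X - X * adjoint L) * S))
        + conj (ν * ξ t) • ((σm * A) ⊗ₜ[ℂ] (adjoint S * (X * L - L * X)))
        + ((‖ν * ξ t‖ : ℂ) ^ 2) • ((σm * A * σp) ⊗ₜ[ℂ] (adjoint S * X * S - X)))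
    (G0 G1 G0s G1s : ℝ → Matrix (Fin 2) (Fin 2) ℂ ⊗[ℂ] (E →L[ℂ] E))
    (hG0 : ∀ t, G0 t = -((1 : Matrix (Fin 2) (Fin 2) ℂ) ⊗ₜ[ℂ]
          ((1/2 : ℂ) • (adjoint L * L) + Complex.I • H))
        - (ν * ξ t) • (σp ⊗ₜ[ℂ] (L + adjoint L * S)))
    (hG1 : ∀ t, G1 t = (1 : Matrix (Fin 2) (Fin 2) ℂ) ⊗ₜ[ℂ] L
        + (ν * ξ t) • (σp ⊗ₜ[ℂ] (S - 1)))
    (hG0s : ∀ t, G0s t = -((1 : Matrix (Fin 2) (Fin 2) ℂ) ⊗ₜ[ℂ]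
          ((1/2 : ℂ) • (adjoint L * L) - Complex.I • H))
        - conj (ν * ξ t) • (σm ⊗ₜ[ℂ] (adjoint L + adjoint S * L)))
    (hG1s : ∀ t, G1s t = (1 : Matrix (Fin 2) (Fin 2) ℂ) ⊗ₜ[ℂ] adjoint L
        + conj (ν * ξ t) • (σm ⊗ₜ[ℂ] (adjoint S - 1)))
    (T Q : ℝ → Matrix (Fin 2) (Fin 2) ℂ ⊗[ℂ] (E →L[ℂ] E) →
      Matrix (Fin 2) (Fin 2) ℂ ⊗[ℂ] (E →L[ℂ] E))
    (hT : ∀ t M, T t M = G1s t * M * G1 t + M * G0 t + G0s t * M)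
    (hQ : ∀ t M, Q t M = M * G1 t + G1s t * M) :
    ∀ t (A : Matrix (Fin 2) (Fin 2) ℂ) (X : E →L[ℂ] E),
      T t (A ⊗ₜ[ℂ] X)
        + (ν * ξ t) • (Q t (A ⊗ₜ[ℂ] X) * (σp ⊗ₜ[ℂ] 1))
        + conj (ν * ξ t) • ((σm ⊗ₜ[ℂ] 1) * Q t (A ⊗ₜ[ℂ] X))
        = G t A X := by
  intro t A X
  have hc : ((‖ν * ξ t‖ : ℂ)) ^ 2 = conj (ν * ξ t) * (ν * ξ t) := (Complex.conj_mul' _).symm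
  have hppA : ∀ B : Matrix (Fin 2) (Fin 2) ℂ, B * (σp * σp) = B * σp * σp :=
    fun B => (mul_assoc B σp σp).symm
  have hmmA : ∀ B : Matrix (Fin 2) (Fin 2) ℂ, σm * (σm * B) = σm * σm * B :=
    fun B => (mul_assoc σm σm B).symm
  have hpp : σp * σp = 0 := by
    subst hp; ext i j; simp [Matrix.single, Matrix.mul_apply, Fin.sum_univ_two]
  have hmm2 : σm * σm = 0 := by
    subst hm; ext i j; simp [Matrix.single, Matrix.mul_apply, Fin.sum_univ_two]
  rw [hT, hQ, hG, hG0 t, hG1 t, hG0s t, hG1s t, h𝓛, hc]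
  simp only [mul_add, add_mul, mul_sub, sub_mul, mul_one, one_mul, mul_neg, neg_mul,
    smul_mul_assoc, mul_smul_comm, smul_smul, smul_sub, smul_add, smul_neg,
    Algebra.TensorProduct.tmul_mul_tmul, mul_assoc, hmmA, hpp, hmm2, Matrix.mul_zero,
    Matrix.zero_mul, TensorProduct.zero_tmul, TensorProduct.tmul_zero, smul_zero,
    TensorProduct.tmul_add, TensorProduct.add_tmul, TensorProduct.tmul_sub,
    TensorProduct.sub_tmul, TensorProduct.tmul_smul, ← TensorProduct.smul_tmul',
    Matrix.one_mul, Matrix.mul_one]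
  have hmn : ∀ (u v : Matrix (Fin 2) (Fin 2) ℂ ⊗[ℂ] (E →L[ℂ] E)), u * -v = -(u*v) :=
    fun u v => mul_neg u v
  have hnm : ∀ (u v : Matrix (Fin 2) (Fin 2) ℂ ⊗[ℂ] (E →L[ℂ] E)), -u * v = -(u*v) :=
    fun u v => neg_mul u v
  simp only [hmn, hnm, neg_neg, mul_add, add_mul, mul_sub, sub_mul, neg_sub, neg_add,
    Algebra.TensorProduct.tmul_mul_tmul, ← TensorProduct.smul_tmul', TensorProduct.tmul_smul,
    smul_smul, mul_assoc, Matrix.mul_one, Matrix.one_mul, mul_one, one_mul,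
    smul_mul_assoc, mul_smul_comm, TensorProduct.tmul_add, TensorProduct.add_tmul,
    TensorProduct.tmul_sub, TensorProduct.sub_tmul, smul_add, smul_sub, smul_neg,
    hmmA, hpp, hmm2, Matrix.mul_zero, Matrix.zero_mul, TensorProduct.zero_tmul,
    TensorProduct.tmul_zero, smul_zero]
  module
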